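/- There exists a finite data set Ω of four individuals with attributes D, G, M : Ω → Bool given by the rows (D, G, M) = (1, F, 1), (0, F, 0), (1, M-gender, 0), (0, M-gender, 0) (G the protected attribute with value F encoded as 1), such that the discrimination score of Ω with respect to G (computed from the counts fᵢⱼ of tuples with D = i and G-protected value j) is 0, while the prediction rule D̂ = M, which does not use the protected attribute, yields a predicted data set whose discrimination score with respect to G is 1/2. Hence a classification model built from a fair (discrimination-free) data set can be discriminatory. -/
import Mathlib
set_option maxRecDepth 4000

/-- The count (as a rational) of individuals in `Fin 4` with outcome value `i`
and protected value `j`. -/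
def cnt4 (D P : Fin 4 → Bool) (i j : Bool) : ℚ :=
  ((Finset.univ.filter (fun t => D t = i ∧ P t = j)).card : ℚ)

/-- The discrimination score of a four-individual data set with outcome `D`
and protected attribute `P` (no explanatory attributes). -/
def score4 (D P : Fin 4 → Bool) : ℚ :=
  cnt4 D P true true / (cnt4 D P true true + cnt4 D P false true) -
    cnt4 D P true false / (cnt4 D P true false + cnt4 D P false false)

/-- There is a four-row data set (D, G, M) =
(1,F,1), (0,F,0), (1,M,0), (0,M,0) (female G encoded as `true`) that is
discrimination-free with respect to G, yet the prediction rule D̂ = M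
(which does not use the protected attribute) has discrimination score 1/2
with respect to G.  A model built from fair data can be discriminatory. -/
theorem fair_data_model_discriminates :
    ∃ D G M : Fin 4 → Bool,
      D 0 = true ∧ G 0 = true ∧ M 0 = true ∧
      D 1 = false ∧ G 1 = true ∧ M 1 = false ∧
      D 2 = true ∧ G 2 = false ∧ M 2 = false ∧
      D 3 = false ∧ G 3 = false ∧ M 3 = false ∧
      score4 D G = 0 ∧ score4 M G = 1 / 2 := by
  have e : ∀ (D P : Fin 4 → Bool) (i j : Bool) (n : ℕ),
      (Finset.univ.filter (fun t => D t = i ∧ P t = j)).card = n → cnt4 D P i j = n := by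
    intro D P i j n h; rw [cnt4, h]
  refine ⟨![true, false, true, false], ![true, true, false, false],
    ![true, false, false, false], rfl, rfl, rfl, rfl, rfl, rfl, rfl, rfl, rfl, rfl, rfl, rfl,
    ?_, ?_⟩
  · rw [score4, e _ _ _ _ 1 (by decide), e _ _ _ _ 1 (by decide),
      e _ _ _ _ 1 (by decide), e _ _ _ _ 1 (by decide)]
    norm_num
  · rw [score4, e _ _ _ _ 1 (by decide), e _ _ _ _ 1 (by decide),
      e _ _ _ _ 0 (by decide), e _ _ _ _ 2 (by decide)]
    norm_num
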